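/- arXiv:1511.06525 — 2 statements merged into one kernel-verified Lean document; each statement's English description precedes it below -/
import Mathlib

section
/- The highest-dose extended Senn design ξ_H is LV-optimal among extended dose-escalation designs (t = n+1): (a) for every extended dose-escalation design ξ, every stage k ∈ {1,…,n}, and every u with M^{(k)}(ξ) u = c_k, one has c_k^T u ≥ 4(n+1), and for ξ_H and each such k there exists u with M^{(k)}(ξ_H) u = c_k and c_k^T u = 4(n+1); (b) for every extended dose-escalation design ξ and every u with M(ξ) u = c_n (the full moment matrix, all n+1 cohorts), one has c_n^T u ≥ 2(n+1), and for ξ_H there exists u with M(ξ_H) u = c_n and c_n^T u = 2(n+1). -/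
noncomputable section

open Matrix Finset

/-- An approximate design on treatments 0,…,n and cohorts 1,…,t:
nonnegative weights summing to 1. -/
def isDesign (n t : ℕ) (ξ : Fin (n+1) → Fin t → ℝ) : Prop :=
  (∀ i k, 0 ≤ ξ i k) ∧ ∑ i, ∑ k, ξ i k = 1

/-- A dose-escalation design: (i) in cohort k ≤ n only treatments 0,…,k are
allowed; (ii) each cohort has proportion 1/t. -/
def isEscalation (n t : ℕ) (ξ : Fin (n+1) → Fin t → ℝ) : Prop :=
  isDesign n t ξ ∧
  (∀ (i : Fin (n+1)) (k : Fin t), k.val + 1 ≤ n → k.val + 1 < i.val → ξ i k = 0) ∧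
  (∀ k : Fin t, ∑ i, ξ i k = 1 / t)

/-- Index of the parameter vector β = (τ₀,…,τₙ, μ, θ₁,…,θ_t) ∈ ℝ^{n+t+2}. -/
abbrev PIdx (n t : ℕ) := Fin (n+1) ⊕ (Unit ⊕ Fin t)

/-- The regression vector f(i,k) = (e_{i+1}^T, 1, e_k^T)^T. -/
def fvec (n t : ℕ) (i : Fin (n+1)) (k : Fin t) : PIdx n t → ℝ :=
  fun j => match j with
  | Sum.inl a => if a = i then 1 else 0
  | Sum.inr (Sum.inl _) => 1
  | Sum.inr (Sum.inr b) => if b = k then 1 else 0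

/-- The moment matrix M(ξ) = ∑_{i,k} ξ(i,k) f(i,k) f(i,k)^T. -/
def momM (n t : ℕ) (ξ : Fin (n+1) → Fin t → ℝ) : Matrix (PIdx n t) (PIdx n t) ℝ :=
  ∑ i, ∑ k, ξ i k • Matrix.vecMulVec (fvec n t i k) (fvec n t i k)

/-- The stage-k moment matrix M^{(k)}(ξ): only trials in the first k cohorts
(cohorts with cohort number ≤ k) are kept. -/
def momMstage (n t : ℕ) (ξ : Fin (n+1) → Fin t → ℝ) (k : ℕ) :
    Matrix (PIdx n t) (PIdx n t) ℝ :=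
  ∑ i, ∑ j ∈ Finset.univ.filter (fun j : Fin t => j.val < k),
    ξ i j • Matrix.vecMulVec (fvec n t i j) (fvec n t i j)

/-- The vector c_k, with −1 in the coordinate of τ₀, +1 in the coordinate of
τ_k, and 0 elsewhere (so c_k^T β = τ_k − τ₀). -/
def cvec (n t k : ℕ) : PIdx n t → ℝ :=
  fun j => match j with
  | Sum.inl a => if a.val = 0 then -1 else if a.val = k then 1 else 0
  | Sum.inr _ => 0

/-- The Senn design (t = n). -/
def senn (n : ℕ) : Fin (n+1) → Fin n → ℝ :=
  fun i k => if i.val = 0 ∨ i.val = k.val + 1 then 1 / (2 * n) else 0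

/-- The highest-dose extended Senn design (t = n+1): the Senn design in the
first n cohorts; cohort n+1 replicates cohort n. -/
def highSenn (n : ℕ) : Fin (n+1) → Fin (n+1) → ℝ :=
  fun i k =>
    if i.val = 0 then 1 / (2 * (n + 1))
    else if i.val = k.val + 1 then 1 / (2 * (n + 1))
    else if i.val = n ∧ k.val = n then 1 / (2 * (n + 1))
    else 0

lemma fvec_dot {n t : ℕ} (i : Fin (n+1)) (k : Fin t) (v : PIdx n t → ℝ) :
    fvec n t i k ⬝ᵥ v = v (Sum.inl i) + v (Sum.inr (Sum.inl ())) + v (Sum.inr (Sum.inr k)) := by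
  simp [fvec, dotProduct, Fintype.sum_sum_type, ite_mul, add_assoc]

lemma dot_fvec {n t : ℕ} (i : Fin (n+1)) (k : Fin t) (v : PIdx n t → ℝ) :
    v ⬝ᵥ fvec n t i k = v (Sum.inl i) + v (Sum.inr (Sum.inl ())) + v (Sum.inr (Sum.inr k)) := by
  rw [dotProduct_comm, fvec_dot]

lemma sum_mulVec' {ι α : Type*} [Fintype α] [DecidableEq α] (S : Finset ι)
    (A : ι → Matrix α α ℝ) (u : α → ℝ) :
    (∑ s ∈ S, A s).mulVec u = ∑ s ∈ S, (A s).mulVec u := by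
  ext p
  simp only [Matrix.mulVec, dotProduct, Matrix.sum_apply, Finset.sum_apply, Finset.sum_mul]
  exact Finset.sum_comm

lemma smul_vecMulVec_mulVec {α : Type*} [Fintype α] (ρ : ℝ) (a b u : α → ℝ) :
    (ρ • Matrix.vecMulVec a b).mulVec u = (ρ * (b ⬝ᵥ u)) • a := by
  ext p
  simp only [Matrix.mulVec, dotProduct, Matrix.smul_apply, Matrix.vecMulVec_apply,
    Pi.smul_apply, smul_eq_mul, Finset.mul_sum]
  rw [Finset.sum_mul]
  apply Finset.sum_congr rfl; intro q _; ring

lemma dot_sum' {ι α : Type*} [Fintype α] (S : Finset ι) (w : α → ℝ) (g : ι → α → ℝ) :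
    w ⬝ᵥ (∑ s ∈ S, g s) = ∑ s ∈ S, w ⬝ᵥ g s := by
  simp only [dotProduct, Finset.sum_apply, Finset.mul_sum]
  exact Finset.sum_comm

lemma dot_smul' {α : Type*} [Fintype α] (r : ℝ) (w a : α → ℝ) :
    w ⬝ᵥ (r • a) = r * (w ⬝ᵥ a) := by
  simp [dotProduct, Finset.mul_sum]
  apply Finset.sum_congr rfl; intro q _; ring

lemma genM_dot {n t : ℕ} (ξ : Fin (n+1) → Fin t → ℝ) (S : Finset (Fin t)) (u w : PIdx n t → ℝ) :
    w ⬝ᵥ ((∑ i, ∑ j ∈ S, ξ i j • Matrix.vecMulVec (fvec n t i j) (fvec n t i j)).mulVec u)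
    = ∑ i, ∑ j ∈ S, ξ i j * ((w ⬝ᵥ fvec n t i j) * (fvec n t i j ⬝ᵥ u)) := by
  rw [sum_mulVec']
  rw [dot_sum']
  apply Finset.sum_congr rfl; intro i _
  rw [sum_mulVec', dot_sum']
  apply Finset.sum_congr rfl; intro j _
  rw [smul_vecMulVec_mulVec, dot_smul']; ring

/-- weighted Cauchy-Schwarz for double sums -/
lemma weighted_cs {n t : ℕ} (ρ a b : Fin (n+1) → Fin t → ℝ) (S : Finset (Fin t))
    (hρ : ∀ i j, 0 ≤ ρ i j) :
    (∑ i, ∑ j ∈ S, ρ i j * (a i j * b i j))^2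
    ≤ (∑ i, ∑ j ∈ S, ρ i j * (a i j)^2) * (∑ i, ∑ j ∈ S, ρ i j * (b i j)^2) := by
  rw [← Finset.sum_product' (s := Finset.univ) (t := S),
      ← Finset.sum_product' (s := Finset.univ) (t := S),
      ← Finset.sum_product' (s := Finset.univ) (t := S)]
  exact Finset.sum_sq_le_sum_mul_sum_of_sq_eq_mul _
    (fun p _ => mul_nonneg (hρ p.1 p.2) (sq_nonneg _))
    (fun p _ => mul_nonneg (hρ p.1 p.2) (sq_nonneg _))
    (fun p _ => by ring)

lemma lowerA (n : ℕ) (hn : 2 ≤ n) (ξ : Fin (n+1) → Fin (n+1) → ℝ)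
    (hξ : isEscalation n (n+1) ξ) (k : ℕ) (hk1 : 1 ≤ k) (hkn : k ≤ n)
    (u : PIdx n (n+1) → ℝ) (hu : (momMstage n (n+1) ξ k).mulVec u = cvec n (n+1) k) :
    4 * ((n : ℝ) + 1) ≤ cvec n (n+1) k ⬝ᵥ u := by
  obtain ⟨⟨hpos, -⟩, hzero, hcoh⟩ := hξ
  set N : ℝ := (n : ℝ) + 1 with hN
  have hN3 : (3:ℝ) ≤ N := by
    have h2n : (2:ℝ) ≤ (n:ℝ) := by exact_mod_cast hn
    rw [hN]; linarith
  set Kc : Fin (n+1) := ⟨k, by omega⟩ with hKc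
  set Jc : Fin (n+1) := ⟨k-1, by omega⟩ with hJc
  set F : Finset (Fin (n+1)) := Finset.univ.filter (fun j : Fin (n+1) => j.val < k) with hF
  set w : ℝ := ξ Kc Jc with hw
  set v : PIdx n (n+1) → ℝ :=
    Sum.elim (fun a : Fin (n+1) => if a = Kc then (1:ℝ) else 0)
      (Sum.elim (fun _ => 0) (fun j : Fin (n+1) => if j = Jc then -(N*w) else 0)) with hv
  -- key identity
  have key : ∀ y : PIdx n (n+1) → ℝ, y ⬝ᵥ cvec n (n+1) k
      = ∑ i, ∑ j ∈ F, ξ i j * ((y ⬝ᵥ fvec n (n+1) i j) * (fvec n (n+1) i j ⬝ᵥ u)) := by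
    intro y
    rw [← hu, momMstage, genM_dot]
  have hvf : ∀ (i : Fin (n+1)) (j : Fin (n+1)), v ⬝ᵥ fvec n (n+1) i j
      = (if i = Kc then (1:ℝ) else 0) + (if j = Jc then -(N*w) else 0) := by
    intro i j
    rw [dot_fvec]
    simp [hv]
  have hJcF : Jc ∈ F := by
    rw [hF]; simp [hJc]; omega
  have hvc : v ⬝ᵥ cvec n (n+1) k = 1 := by
    unfold cvec
    rw [dotProduct]
    rw [Fintype.sum_sum_type]
    have h2 : ∀ z : Unit ⊕ Fin (n+1), v (Sum.inr z) *
        (match (Sum.inr z : PIdx n (n+1)) with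
          | Sum.inl a => if a.val = 0 then (-1:ℝ) else if a.val = k then 1 else 0
          | Sum.inr _ => 0) = 0 := by
      intro z; simp
    rw [Finset.sum_congr rfl (fun z _ => h2 z), Finset.sum_const_zero, add_zero]
    have h1 : ∀ a : Fin (n+1), v (Sum.inl a) *
        (if a.val = 0 then (-1:ℝ) else if a.val = k then 1 else 0)
        = if a = Kc then 1 else 0 := by
      intro a
      by_cases ha : a = Kc
      · subst ha
        have : (Kc.val = 0) = False := by simp [hKc]; omega
        simp [hv, hKc, if_neg (by omega : ¬ (k = 0))]
      · simp [hv, ha]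
    rw [Finset.sum_congr rfl (fun a _ => h1 a), Finset.sum_ite_eq' Finset.univ Kc]
    simp
  -- the w bounds
  have hw0 : 0 ≤ w := hpos Kc Jc
  have hsum : ∑ i, ξ i Jc = 1 / N := by
    have := hcoh Jc
    rw [this, hN]; push_cast; ring_nf
  have hwle : w ≤ 1 / N := by
    rw [← hsum]
    exact Finset.single_le_sum (fun i _ => hpos i Jc) (Finset.mem_univ Kc)
  -- Q_vv computation
  have hQvv : (∑ i, ∑ j ∈ F, ξ i j * (v ⬝ᵥ fvec n (n+1) i j)^2) = w * (1 - N*w) := by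
    rw [Finset.sum_comm]
    have hcol : ∀ j ∈ F, (∑ i, ξ i j * (v ⬝ᵥ fvec n (n+1) i j)^2)
        = if j = Jc then w * (1 - N*w) else 0 := by
      intro j hj
      have hjk : j.val < k := by
        rw [hF] at hj; simpa using hj
      by_cases hjJ : j = Jc
      · subst hjJ
        rw [if_pos rfl]
        have hterm : ∀ i : Fin (n+1), ξ i Jc * (v ⬝ᵥ fvec n (n+1) i Jc)^2
            = ξ i Jc * (N*w)^2 + (if i = Kc then ξ i Jc * (1 - 2*(N*w)) else 0) := by
          intro i
          rw [hvf, if_pos (rfl : Jc = Jc)]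
          by_cases hiK : i = Kc
          · rw [if_pos hiK, if_pos hiK]; ring
          · rw [if_neg hiK, if_neg hiK]; ring
        rw [Finset.sum_congr rfl (fun i _ => hterm i), Finset.sum_add_distrib,
            ← Finset.sum_mul, hsum, Finset.sum_ite_eq' Finset.univ Kc]
        simp only [Finset.mem_univ, if_pos, ← hw]
        have hNne : N ≠ 0 := by linarith
        field_simp
        ring
      · rw [if_neg hjJ]
        apply Finset.sum_eq_zero
        intro i _
        by_cases hiK : i = Kc
        · subst hiK
          have : ξ Kc j = 0 := by
            apply hzero
            · have : j.val ≠ k - 1 := by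
                intro hc; exact hjJ (by rw [hJc]; exact Fin.ext hc)
              omega
            · rw [hKc]
              have : j.val ≠ k - 1 := by
                intro hc; exact hjJ (by rw [hJc]; exact Fin.ext hc)
              simp; omega
          rw [this]; ring
        · rw [hvf, if_neg hiK, if_neg hjJ]
          ring
    rw [Finset.sum_congr rfl hcol, Finset.sum_ite_eq' F Jc, if_pos hJcF]
  -- assemble
  have h1 : (∑ i, ∑ j ∈ F, ξ i j * ((v ⬝ᵥ fvec n (n+1) i j) * (fvec n (n+1) i j ⬝ᵥ u))) = 1 := by
    rw [← key v, hvc]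
  have h2 : (∑ i, ∑ j ∈ F, ξ i j * ((fvec n (n+1) i j ⬝ᵥ u))^2) = cvec n (n+1) k ⬝ᵥ u := by
    rw [dotProduct_comm]
    rw [key u]
    apply Finset.sum_congr rfl; intro i _
    apply Finset.sum_congr rfl; intro j _
    rw [dotProduct_comm]; ring
  have hCS := weighted_cs (fun i j => ξ i j) (fun i j => v ⬝ᵥ fvec n (n+1) i j)
      (fun i j => fvec n (n+1) i j ⬝ᵥ u) F (fun i j => hpos i j)
  rw [h1] at hCS
  rw [hQvv] at hCS
  rw [h2] at hCS
  -- now : 1 ≤ (w*(1-N*w)) * (cvec ⬝ᵥ u)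
  set V : ℝ := cvec n (n+1) k ⬝ᵥ u with hV
  have hCS' : 1 ≤ (w * (1 - N*w)) * V := by nlinarith [hCS]
  have hp0 : 0 ≤ w * (1 - N*w) := by
    apply mul_nonneg hw0
    have : N * w ≤ 1 := by
      calc N * w ≤ N * (1/N) := by apply mul_le_mul_of_nonneg_left hwle; linarith
      _ = 1 := by field_simp
    linarith
  have hppos : 0 < w * (1 - N*w) := by
    rcases hp0.lt_or_eq with h | h
    · exact h
    · exfalso; rw [← h] at hCS'; linarith
  have hple : 4*N*(w*(1-N*w)) ≤ 1 := by nlinarith [sq_nonneg (2*N*w - 1)]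
  by_contra hc
  push_neg at hc
  have : (w*(1-N*w)) * V < (w*(1-N*w)) * (4*N) := by
    apply mul_lt_mul_of_pos_left _ hppos
    calc V < 4 * ((n:ℝ)+1) := hc
    _ = 4 * N := by rw [hN]
  nlinarith

set_option maxHeartbeats 2000000 in
lemma lowerB (n : ℕ) (hn : 2 ≤ n) (ξ : Fin (n+1) → Fin (n+1) → ℝ)
    (hξ : isEscalation n (n+1) ξ)
    (u : PIdx n (n+1) → ℝ) (hu : (momM n (n+1) ξ).mulVec u = cvec n (n+1) n) :
    2 * ((n : ℝ) + 1) ≤ cvec n (n+1) n ⬝ᵥ u := by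
  obtain ⟨⟨hpos, -⟩, hzero, hcoh⟩ := hξ
  set N : ℝ := (n : ℝ) + 1 with hN
  have hN3 : (3:ℝ) ≤ N := by
    have h2n : (2:ℝ) ≤ (n:ℝ) := by exact_mod_cast hn
    rw [hN]; linarith
  set Kn : Fin (n+1) := ⟨n, by omega⟩ with hKn
  set J1 : Fin (n+1) := ⟨n-1, by omega⟩ with hJ1
  set J2 : Fin (n+1) := ⟨n, by omega⟩ with hJ2
  have hJ12 : J1 ≠ J2 := by
    rw [hJ1, hJ2, Fin.ne_iff_vne]; simp; omega
  set w1 : ℝ := ξ Kn J1 with hw1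
  set w2 : ℝ := ξ Kn J2 with hw2
  set v : PIdx n (n+1) → ℝ :=
    Sum.elim (fun a : Fin (n+1) => if a = Kn then (1:ℝ) else 0)
      (Sum.elim (fun _ => 0)
        (fun j : Fin (n+1) => if j = J1 then -(N*w1) else if j = J2 then -(N*w2) else 0)) with hv
  have key : ∀ y : PIdx n (n+1) → ℝ, y ⬝ᵥ cvec n (n+1) n
      = ∑ i, ∑ j, ξ i j * ((y ⬝ᵥ fvec n (n+1) i j) * (fvec n (n+1) i j ⬝ᵥ u)) := by
    intro y
    rw [← hu, momM, genM_dot]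
  have hvf : ∀ (i : Fin (n+1)) (j : Fin (n+1)), v ⬝ᵥ fvec n (n+1) i j
      = (if i = Kn then (1:ℝ) else 0)
        + (if j = J1 then -(N*w1) else if j = J2 then -(N*w2) else 0) := by
    intro i j
    rw [dot_fvec]
    simp [hv]
  have hvc : v ⬝ᵥ cvec n (n+1) n = 1 := by
    unfold cvec
    rw [dotProduct, Fintype.sum_sum_type]
    have h2 : ∀ z : Unit ⊕ Fin (n+1), v (Sum.inr z) *
        (match (Sum.inr z : PIdx n (n+1)) with
          | Sum.inl a => if a.val = 0 then (-1:ℝ) else if a.val = n then 1 else 0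
          | Sum.inr _ => 0) = 0 := by
      intro z; simp
    rw [Finset.sum_congr rfl (fun z _ => h2 z), Finset.sum_const_zero, add_zero]
    have h1 : ∀ a : Fin (n+1), v (Sum.inl a) *
        (if a.val = 0 then (-1:ℝ) else if a.val = n then 1 else 0)
        = if a = Kn then 1 else 0 := by
      intro a
      by_cases ha : a = Kn
      · subst ha
        simp [hv, hKn, if_neg (by omega : ¬ (n = 0))]
        have hJ20 : ¬ (J2 = 0) := by
          intro hc; have := congrArg Fin.val hc; rw [hJ2] at this; simp at this; omega
        have hv2 : J2.val = n := by rw [hJ2]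
        rw [if_neg hJ20, if_pos hv2]
      · simp [hv, ha]
    rw [Finset.sum_congr rfl (fun a _ => h1 a), Finset.sum_ite_eq' Finset.univ Kn]
    simp
  have hw10 : 0 ≤ w1 := hpos Kn J1
  have hw20 : 0 ≤ w2 := hpos Kn J2
  have hsum1 : ∑ i, ξ i J1 = 1 / N := by
    have := hcoh J1
    rw [this, hN]; push_cast; ring_nf
  have hsum2 : ∑ i, ξ i J2 = 1 / N := by
    have := hcoh J2
    rw [this, hN]; push_cast; ring_nf
  have hw1le : w1 ≤ 1 / N := by
    rw [← hsum1]
    exact Finset.single_le_sum (fun i _ => hpos i J1) (Finset.mem_univ Kn)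
  have hw2le : w2 ≤ 1 / N := by
    rw [← hsum2]
    exact Finset.single_le_sum (fun i _ => hpos i J2) (Finset.mem_univ Kn)
  have hNne : N ≠ 0 := by linarith
  -- column computation templates
  have hcolgen : ∀ (j : Fin (n+1)) (x : ℝ), (∀ i : Fin (n+1),
        v ⬝ᵥ fvec n (n+1) i j = (if i = Kn then (1:ℝ) else 0) + x) →
      (∑ i, ξ i j * (v ⬝ᵥ fvec n (n+1) i j)^2)
        = (∑ i, ξ i j) * x^2 + ξ Kn j * (1 + 2*x) := by
    intro j x hx
    have hterm : ∀ i : Fin (n+1), ξ i j * (v ⬝ᵥ fvec n (n+1) i j)^2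
        = ξ i j * x^2 + (if i = Kn then ξ i j * (1 + 2*x) else 0) := by
      intro i
      rw [hx i]
      by_cases hiK : i = Kn
      · rw [if_pos hiK, if_pos hiK]; ring
      · rw [if_neg hiK, if_neg hiK]; ring
    rw [Finset.sum_congr rfl (fun i _ => hterm i), Finset.sum_add_distrib,
        ← Finset.sum_mul, Finset.sum_ite_eq' Finset.univ Kn]
    simp
  have hQvv : (∑ i, ∑ j, ξ i j * (v ⬝ᵥ fvec n (n+1) i j)^2)
      = w1 * (1 - N*w1) + w2 * (1 - N*w2) := by
    rw [Finset.sum_comm]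
    have hcol : ∀ j : Fin (n+1), (∑ i, ξ i j * (v ⬝ᵥ fvec n (n+1) i j)^2)
        = (if j = J1 then w1 * (1 - N*w1) else 0) + (if j = J2 then w2 * (1 - N*w2) else 0) := by
      intro j
      by_cases hj1 : j = J1
      · subst hj1
        rw [if_pos rfl, if_neg hJ12]
        rw [hcolgen J1 (-(N*w1)) (fun i => by rw [hvf, if_pos rfl]), hsum1, ← hw1]
        field_simp
        ring
      · by_cases hj2 : j = J2
        · subst hj2
          rw [if_neg hj1, if_pos rfl]
          rw [hcolgen J2 (-(N*w2)) (fun i => by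
              rw [hvf, if_neg hj1, if_pos rfl]), hsum2, ← hw2]
          field_simp
          ring
        · rw [if_neg hj1, if_neg hj2]
          have hjval : j.val + 1 ≤ n ∧ j.val + 1 < n + 0 + 1 := by
            constructor
            · have : j.val ≠ n := by
                intro hc; exact hj2 (by rw [hJ2]; exact Fin.ext hc)
              omega
            · have hn1 : j.val ≠ n - 1 := by
                intro hc; exact hj1 (by rw [hJ1]; exact Fin.ext hc)
              have hn2 : j.val ≠ n := by
                intro hc; exact hj2 (by rw [hJ2]; exact Fin.ext hc)
              omega
          rw [add_zero]
          apply Finset.sum_eq_zero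
          intro i _
          by_cases hiK : i = Kn
          · subst hiK
            have hz : ξ Kn j = 0 := by
              apply hzero
              · exact hjval.1
              · rw [hKn]
                have hn1 : j.val ≠ n - 1 := by
                  intro hc; exact hj1 (by rw [hJ1]; exact Fin.ext hc)
                have hn2 : j.val ≠ n := by
                  intro hc; exact hj2 (by rw [hJ2]; exact Fin.ext hc)
                show j.val + 1 < n; omega
            rw [hz]; ring
          · rw [hvf, if_neg hiK, if_neg hj1, if_neg hj2]
            ring
    rw [Finset.sum_congr rfl (fun j _ => hcol j), Finset.sum_add_distrib,
        Finset.sum_ite_eq' Finset.univ J1, Finset.sum_ite_eq' Finset.univ J2]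
    simp
  have h1 : (∑ i, ∑ j, ξ i j * ((v ⬝ᵥ fvec n (n+1) i j) * (fvec n (n+1) i j ⬝ᵥ u))) = 1 := by
    rw [← key v, hvc]
  have h2 : (∑ i, ∑ j, ξ i j * ((fvec n (n+1) i j ⬝ᵥ u))^2) = cvec n (n+1) n ⬝ᵥ u := by
    rw [dotProduct_comm, key u]
    apply Finset.sum_congr rfl; intro i _
    apply Finset.sum_congr rfl; intro j _
    rw [dotProduct_comm]; ring
  have hCS := weighted_cs (fun i j => ξ i j) (fun i j => v ⬝ᵥ fvec n (n+1) i j)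
      (fun i j => fvec n (n+1) i j ⬝ᵥ u) Finset.univ (fun i j => hpos i j)
  rw [h1, hQvv, h2] at hCS
  set V : ℝ := cvec n (n+1) n ⬝ᵥ u with hV
  set p : ℝ := w1 * (1 - N*w1) + w2 * (1 - N*w2) with hp
  have hCS' : 1 ≤ p * V := by nlinarith [hCS]
  have hp10 : 0 ≤ w1 * (1 - N*w1) := by
    apply mul_nonneg hw10
    have : N * w1 ≤ 1 := by
      calc N * w1 ≤ N * (1/N) := by apply mul_le_mul_of_nonneg_left hw1le; linarith
      _ = 1 := by field_simp
    linarith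
  have hp20 : 0 ≤ w2 * (1 - N*w2) := by
    apply mul_nonneg hw20
    have : N * w2 ≤ 1 := by
      calc N * w2 ≤ N * (1/N) := by apply mul_le_mul_of_nonneg_left hw2le; linarith
      _ = 1 := by field_simp
    linarith
  have hp0 : 0 ≤ p := by rw [hp]; linarith
  have hppos : 0 < p := by
    rcases hp0.lt_or_eq with h | h
    · exact h
    · exfalso; rw [← h] at hCS'; linarith
  have hple : 2*N*p ≤ 1 := by
    rw [hp]
    nlinarith [sq_nonneg (2*N*w1 - 1), sq_nonneg (2*N*w2 - 1)]
  by_contra hc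
  push_neg at hc
  have : p * V < p * (2*N) := by
    apply mul_lt_mul_of_pos_left _ hppos
    calc V < 2 * ((n:ℝ)+1) := hc
    _ = 2 * N := by rw [hN]
  nlinarith

lemma genM_mulVec {n t : ℕ} (ξ : Fin (n+1) → Fin t → ℝ) (S : Finset (Fin t)) (u : PIdx n t → ℝ) :
    (∑ i, ∑ j ∈ S, ξ i j • Matrix.vecMulVec (fvec n t i j) (fvec n t i j)).mulVec u
    = ∑ i, ∑ j ∈ S, (ξ i j * (fvec n t i j ⬝ᵥ u)) • fvec n t i j := by
  rw [sum_mulVec']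
  apply Finset.sum_congr rfl; intro i _
  rw [sum_mulVec']
  apply Finset.sum_congr rfl; intro j _
  exact smul_vecMulVec_mulVec _ _ _ _

lemma sum_sum_ite {α β M : Type*} [Fintype α] [DecidableEq α] [DecidableEq β] [AddCommMonoid M]
    (S : Finset β) (i0 : α) (j0 : β) (hj : j0 ∈ S) (C : M) :
    (∑ i : α, ∑ j ∈ S, (if i = i0 ∧ j = j0 then C else 0)) = C := by
  have h2 : ∀ i : α, (∑ j ∈ S, (if i = i0 ∧ j = j0 then C else 0))
      = if i = i0 then C else 0 := by
    intro i
    by_cases hi : i = i0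
    · subst hi
      simp only [true_and]
      rw [Finset.sum_ite_eq' S j0]
      simp [hj]
    · simp [hi]
  rw [Finset.sum_congr rfl (fun i _ => h2 i), Finset.sum_ite_eq' Finset.univ i0]
  simp

lemma existA (n : ℕ) (hn : 2 ≤ n) (k : ℕ) (hk1 : 1 ≤ k) (hkn : k ≤ n) :
    ∃ u : PIdx n (n+1) → ℝ,
      (momMstage n (n+1) (highSenn n) k).mulVec u = cvec n (n+1) k ∧
      cvec n (n+1) k ⬝ᵥ u = 4 * ((n : ℝ) + 1) := by
  set N : ℝ := (n : ℝ) + 1 with hN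
  have hNpos : (0:ℝ) < N := by positivity
  set Kc : Fin (n+1) := ⟨k, by omega⟩ with hKc
  set Jc : Fin (n+1) := ⟨k-1, by omega⟩ with hJc
  have hvKc : Kc.val = k := rfl
  have hvJc : Jc.val = k - 1 := rfl
  set F : Finset (Fin (n+1)) := Finset.univ.filter (fun j : Fin (n+1) => j.val < k) with hF
  have hJcF : Jc ∈ F := by
    rw [hF, Finset.mem_filter]
    exact ⟨Finset.mem_univ _, by rw [hvJc]; omega⟩
  set u : PIdx n (n+1) → ℝ :=
    Sum.elim (fun a : Fin (n+1) => if a = Kc then 4*N else 0)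
      (Sum.elim (fun _ => 0) (fun j : Fin (n+1) => if j = Jc then -(2*N) else 0)) with hu
  have hfu : ∀ (i : Fin (n+1)) (j : Fin (n+1)), fvec n (n+1) i j ⬝ᵥ u
      = (if i = Kc then 4*N else 0) + (if j = Jc then -(2*N) else 0) := by
    intro i j
    rw [fvec_dot]
    simp [hu]
  have hKc0 : (0 : Fin (n+1)) ≠ Kc := by
    intro hc
    have := congrArg Fin.val hc
    rw [hvKc] at this
    simp at this
    omega
  -- highSenn facts
  have hS0 : ∀ j : Fin (n+1), highSenn n 0 j = 1/(2*N) := by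
    intro j
    have h0 : (0 : Fin (n+1)).val = 0 := rfl
    simp [highSenn, h0, hN]
  have hSK : highSenn n Kc Jc = 1/(2*N) := by
    have h1 : ¬ (Kc.val = 0) := by rw [hvKc]; omega
    have h2 : Kc.val = Jc.val + 1 := by rw [hvKc, hvJc]; omega
    unfold highSenn
    rw [if_neg h1, if_pos h2, hN]
  refine ⟨u, ?_, ?_⟩
  · rw [momMstage, genM_mulVec]
    have hterm : ∀ (i : Fin (n+1)), ∀ j ∈ F,
        (highSenn n i j * (fvec n (n+1) i j ⬝ᵥ u)) • fvec n (n+1) i j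
        = (if i = 0 ∧ j = Jc then (-1:ℝ) • fvec n (n+1) 0 Jc else 0)
          + (if i = Kc ∧ j = Jc then fvec n (n+1) Kc Jc else 0) := by
      intro i j hjF
      have hjk : j.val < k := by rw [hF] at hjF; simpa using hjF
      rw [hfu]
      by_cases hjJ : j = Jc
      · subst hjJ
        by_cases hi0 : i = 0
        · subst hi0
          rw [if_pos (show (0:Fin (n+1)) = 0 ∧ Jc = Jc from ⟨rfl, rfl⟩),
              if_neg (show ¬((0:Fin (n+1)) = Kc ∧ Jc = Jc) from fun hc => hKc0 hc.1),
              if_neg hKc0, if_pos (rfl : Jc = Jc), hS0]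
          have hc : (1 / (2*N) * (0 + -(2*N))) = -1 := by field_simp; ring
          rw [add_zero, hc]
        · by_cases hiK : i = Kc
          · subst hiK
            rw [if_neg (show ¬((Kc:Fin (n+1)) = 0 ∧ Jc = Jc) from fun hc => hKc0 hc.1.symm),
                if_pos (show (Kc:Fin (n+1)) = Kc ∧ Jc = Jc from ⟨rfl, rfl⟩),
                if_pos (rfl : (Kc:Fin (n+1)) = Kc), if_pos (rfl : Jc = Jc), hSK, zero_add]
            have hc : (1 / (2*N) * (4*N + -(2*N))) = 1 := by field_simp; ring
            rw [hc, one_smul]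
          · have hS : highSenn n i Jc = 0 := by
              have h1 : ¬ (i.val = 0) := fun hc => hi0 (Fin.ext (by simpa using hc))
              have h2 : ¬ (i.val = Jc.val + 1) := by
                rw [hvJc]
                intro hc
                exact hiK (Fin.ext (by rw [hvKc]; omega))
              have h3 : ¬ (i.val = n ∧ Jc.val = n) := by
                rw [hvJc]; rintro ⟨-, hc⟩; omega
              simp [highSenn, h1, h2, h3]
            rw [hS, zero_mul, zero_smul,
                if_neg (show ¬(i = 0 ∧ Jc = Jc) from fun hc => hi0 hc.1),
                if_neg (show ¬(i = Kc ∧ Jc = Jc) from fun hc => hiK hc.1), add_zero]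
      · rw [if_neg (show ¬(i = 0 ∧ j = Jc) from fun hc => hjJ hc.2),
            if_neg (show ¬(i = Kc ∧ j = Jc) from fun hc => hjJ hc.2),
            if_neg hjJ, add_zero, add_zero]
        by_cases hiK : i = Kc
        · subst hiK
          have hS : highSenn n Kc j = 0 := by
            have h1 : ¬ (Kc.val = 0) := by rw [hvKc]; omega
            have h2 : ¬ (Kc.val = j.val + 1) := by
              rw [hvKc]
              intro hc
              exact hjJ (Fin.ext (by rw [hvJc]; omega))
            have h3 : ¬ (Kc.val = n ∧ j.val = n) := by
              rintro ⟨-, hc⟩; omega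
            simp [highSenn, h1, h2, h3]
          rw [hS, zero_mul, zero_smul]
        · rw [if_neg hiK, mul_zero, zero_smul]
    rw [Finset.sum_congr rfl (fun i _ => Finset.sum_congr rfl (fun j hj => hterm i j hj)),
        Finset.sum_congr rfl (fun i (_ : i ∈ Finset.univ) =>
          (Finset.sum_add_distrib : ∑ j ∈ F, _ = _)),
        Finset.sum_add_distrib,
        sum_sum_ite F (0 : Fin (n+1)) Jc hJcF ((-1:ℝ) • fvec n (n+1) 0 Jc),
        sum_sum_ite F Kc Jc hJcF (fvec n (n+1) Kc Jc)]
    funext p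
    rcases p with a | z
    · simp only [Pi.add_apply, Pi.smul_apply, smul_eq_mul, fvec, cvec]
      by_cases ha0 : a = 0
      · subst ha0
        have h0 : (0 : Fin (n+1)).val = 0 := rfl
        rw [if_pos rfl, if_neg (fun hc : (0:Fin (n+1)) = Kc => hKc0 hc)]
        simp [h0]
      · have h0 : ¬ (a.val = 0) := fun hc => ha0 (Fin.ext (by simpa using hc))
        rw [if_neg ha0]
        by_cases haK : a = Kc
        · subst haK
          rw [if_pos rfl]
          simp [hvKc, h0]
          intro hk0; omega
        · have hk' : ¬ (a.val = k) := by
            intro hc; exact haK (Fin.ext (by rw [hvKc]; omega))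
          rw [if_neg haK]
          simp [h0, hk']
    · rcases z with _ | b
      · simp [fvec, cvec]
      · simp only [Pi.add_apply, Pi.smul_apply, smul_eq_mul, fvec, cvec]
        by_cases hb : b = Jc <;> simp [hb]
  · unfold cvec
    rw [dotProduct, Fintype.sum_sum_type]
    have h2 : ∀ z : Unit ⊕ Fin (n+1),
        (match (Sum.inr z : PIdx n (n+1)) with
          | Sum.inl a => if a.val = 0 then (-1:ℝ) else if a.val = k then 1 else 0
          | Sum.inr _ => 0) * u (Sum.inr z) = 0 := by
      intro z; simp
    rw [Finset.sum_congr rfl (fun z _ => h2 z), Finset.sum_const_zero, add_zero]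
    have h1 : ∀ a : Fin (n+1),
        (if a.val = 0 then (-1:ℝ) else if a.val = k then 1 else 0) * u (Sum.inl a)
        = if a = Kc then 4*N else 0 := by
      intro a
      by_cases haK : a = Kc
      · subst haK
        have hv0 : ¬ (Kc.val = 0) := by rw [hvKc]; omega
        have hvk : (Kc.val = k) := hvKc
        simp [hu, hv0, hvk]
        intro hk0; omega
      · simp [hu, haK]
    rw [Finset.sum_congr rfl (fun a _ => h1 a), Finset.sum_ite_eq' Finset.univ Kc]
    simp [hN]

lemma existB (n : ℕ) (hn : 2 ≤ n) :
    ∃ u : PIdx n (n+1) → ℝ,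
      (momM n (n+1) (highSenn n)).mulVec u = cvec n (n+1) n ∧
      cvec n (n+1) n ⬝ᵥ u = 2 * ((n : ℝ) + 1) := by
  set N : ℝ := (n : ℝ) + 1 with hN
  have hNpos : (0:ℝ) < N := by positivity
  have hNne : N ≠ 0 := ne_of_gt hNpos
  set Kn : Fin (n+1) := ⟨n, by omega⟩ with hKn
  set J1 : Fin (n+1) := ⟨n-1, by omega⟩ with hJ1
  have hvKn : Kn.val = n := rfl
  have hvJ1 : J1.val = n - 1 := rfl
  have hKn0 : (0 : Fin (n+1)) ≠ Kn := by
    intro hc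
    have := congrArg Fin.val hc
    rw [hvKn] at this
    simp at this
    omega
  have hJ1Kn : J1 ≠ Kn := by
    intro hc
    have := congrArg Fin.val hc
    rw [hvJ1, hvKn] at this
    omega
  have h0J1 : (0 : Fin (n+1)) ≠ J1 := by
    intro hc
    have := congrArg Fin.val hc
    rw [hvJ1] at this
    simp at this
    omega
  set u : PIdx n (n+1) → ℝ :=
    Sum.elim (fun a : Fin (n+1) => if a = Kn then 2*N else 0)
      (Sum.elim (fun _ => 0)
        (fun j : Fin (n+1) => if j = J1 then -N else if j = Kn then -N else 0)) with hu
  have hfu : ∀ (i : Fin (n+1)) (j : Fin (n+1)), fvec n (n+1) i j ⬝ᵥ u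
      = (if i = Kn then 2*N else 0) + (if j = J1 then -N else if j = Kn then -N else 0) := by
    intro i j
    rw [fvec_dot]
    simp [hu]
  have hS0 : ∀ j : Fin (n+1), highSenn n 0 j = 1/(2*N) := by
    intro j
    have h0 : (0 : Fin (n+1)).val = 0 := rfl
    simp [highSenn, h0, hN]
  have hSK1 : highSenn n Kn J1 = 1/(2*N) := by
    have h1 : ¬ (Kn.val = 0) := by rw [hvKn]; omega
    have h2 : Kn.val = J1.val + 1 := by rw [hvKn, hvJ1]; omega
    unfold highSenn
    rw [if_neg h1, if_pos h2, hN]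
  have hSK2 : highSenn n Kn Kn = 1/(2*N) := by
    have h1 : ¬ (Kn.val = 0) := by rw [hvKn]; omega
    have h2 : ¬ (Kn.val = Kn.val + 1) := by omega
    have h3 : (Kn.val = n ∧ Kn.val = n) := ⟨hvKn, hvKn⟩
    unfold highSenn
    rw [if_neg h1, if_neg h2, if_pos h3, hN]
  have hSKo : ∀ j : Fin (n+1), j ≠ J1 → j ≠ Kn → highSenn n Kn j = 0 := by
    intro j hj1 hjK
    have h1 : ¬ (Kn.val = 0) := by rw [hvKn]; omega
    have h2 : ¬ (Kn.val = j.val + 1) := by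
      rw [hvKn]
      intro hc
      exact hj1 (Fin.ext (by rw [hvJ1]; omega))
    have h3 : ¬ (Kn.val = n ∧ j.val = n) := by
      rintro ⟨-, hc⟩
      exact hjK (Fin.ext (by rw [hvKn]; omega))
    unfold highSenn
    rw [if_neg h1, if_neg h2, if_neg h3]
  have hSo1 : ∀ i : Fin (n+1), i ≠ 0 → i ≠ Kn → highSenn n i J1 = 0 := by
    intro i hi0 hiK
    have h1 : ¬ (i.val = 0) := fun hc => hi0 (Fin.ext (by simpa using hc))
    have h2 : ¬ (i.val = J1.val + 1) := by
      rw [hvJ1]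
      intro hc
      exact hiK (Fin.ext (by rw [hvKn]; omega))
    have h3 : ¬ (i.val = n ∧ J1.val = n) := by
      rw [hvJ1]; rintro ⟨-, hc⟩; omega
    unfold highSenn
    rw [if_neg h1, if_neg h2, if_neg h3]
  have hSo2 : ∀ i : Fin (n+1), i ≠ 0 → i ≠ Kn → highSenn n i Kn = 0 := by
    intro i hi0 hiK
    have h1 : ¬ (i.val = 0) := fun hc => hi0 (Fin.ext (by simpa using hc))
    have h2 : ¬ (i.val = Kn.val + 1) := by
      rw [hvKn]
      intro hc
      have := i.isLt
      omega
    have h3 : ¬ (i.val = n ∧ Kn.val = n) := by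
      rintro ⟨hc, -⟩
      exact hiK (Fin.ext (by rw [hvKn]; omega))
    unfold highSenn
    rw [if_neg h1, if_neg h2, if_neg h3]
  refine ⟨u, ?_, ?_⟩
  · rw [momM, genM_mulVec]
    have hterm : ∀ (i j : Fin (n+1)),
        (highSenn n i j * (fvec n (n+1) i j ⬝ᵥ u)) • fvec n (n+1) i j
        = (if i = 0 ∧ j = J1 then (-(1/2):ℝ) • fvec n (n+1) 0 J1 else 0)
          + (if i = 0 ∧ j = Kn then (-(1/2):ℝ) • fvec n (n+1) 0 Kn else 0)
          + (if i = Kn ∧ j = J1 then ((1/2):ℝ) • fvec n (n+1) Kn J1 else 0)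
          + (if i = Kn ∧ j = Kn then ((1/2):ℝ) • fvec n (n+1) Kn Kn else 0) := by
      intro i j
      rw [hfu]
      by_cases hj1 : j = J1
      · subst hj1
        by_cases hi0 : i = 0
        · subst hi0
          rw [hS0, if_neg hKn0, if_pos (rfl : (J1:Fin (n+1)) = J1),
              if_pos (show (0:Fin (n+1)) = 0 ∧ (J1:Fin (n+1)) = J1 from ⟨rfl, rfl⟩),
              if_neg (show ¬((0:Fin (n+1)) = 0 ∧ (J1:Fin (n+1)) = Kn) from fun hc => hJ1Kn hc.2),
              if_neg (show ¬((0:Fin (n+1)) = Kn ∧ (J1:Fin (n+1)) = J1) from fun hc => hKn0 hc.1),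
              if_neg (show ¬((0:Fin (n+1)) = Kn ∧ (J1:Fin (n+1)) = Kn) from fun hc => hKn0 hc.1)]
          simp only [zero_add, add_zero]
          rw [show (1 / (2*N) * -N) = (-(1/2) : ℝ) from by field_simp]
        · by_cases hiK : i = Kn
          · subst hiK
            rw [hSK1, if_pos (rfl : (Kn:Fin (n+1)) = Kn), if_pos (rfl : (J1:Fin (n+1)) = J1),
                if_neg (show ¬((Kn:Fin (n+1)) = 0 ∧ (J1:Fin (n+1)) = J1) from
                  fun hc => hKn0 hc.1.symm),
                if_neg (show ¬((Kn:Fin (n+1)) = 0 ∧ (J1:Fin (n+1)) = Kn) from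
                  fun hc => hKn0 hc.1.symm),
                if_pos (show (Kn:Fin (n+1)) = Kn ∧ (J1:Fin (n+1)) = J1 from ⟨rfl, rfl⟩),
                if_neg (show ¬((Kn:Fin (n+1)) = Kn ∧ (J1:Fin (n+1)) = Kn) from
                  fun hc => hJ1Kn hc.2)]
            simp only [zero_add, add_zero]
            rw [show (1 / (2*N) * (2*N + -N)) = ((1/2) : ℝ) from by field_simp; ring]
          · rw [hSo1 i hi0 hiK, zero_mul, zero_smul,
                if_neg (show ¬(i = 0 ∧ (J1:Fin (n+1)) = J1) from fun hc => hi0 hc.1),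
                if_neg (show ¬(i = 0 ∧ (J1:Fin (n+1)) = Kn) from fun hc => hi0 hc.1),
                if_neg (show ¬(i = Kn ∧ (J1:Fin (n+1)) = J1) from fun hc => hiK hc.1),
                if_neg (show ¬(i = Kn ∧ (J1:Fin (n+1)) = Kn) from fun hc => hiK hc.1)]
            simp only [add_zero]
      · by_cases hjK : j = Kn
        · subst hjK
          by_cases hi0 : i = 0
          · subst hi0
            rw [hS0, if_neg hKn0,
                if_neg (show ¬((Kn:Fin (n+1)) = J1) from fun hc => hJ1Kn hc.symm),
                if_pos (rfl : (Kn:Fin (n+1)) = Kn),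
                if_neg (show ¬((0:Fin (n+1)) = 0 ∧ (Kn:Fin (n+1)) = J1) from
                  fun hc => hJ1Kn hc.2.symm),
                if_pos (show (0:Fin (n+1)) = 0 ∧ (Kn:Fin (n+1)) = Kn from ⟨rfl, rfl⟩),
                if_neg (show ¬((0:Fin (n+1)) = Kn ∧ (Kn:Fin (n+1)) = J1) from
                  fun hc => hKn0 hc.1),
                if_neg (show ¬((0:Fin (n+1)) = Kn ∧ (Kn:Fin (n+1)) = Kn) from
                  fun hc => hKn0 hc.1)]
            simp only [zero_add, add_zero]
            rw [show (1 / (2*N) * -N) = (-(1/2) : ℝ) from by field_simp]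
          · by_cases hiK : i = Kn
            · subst hiK
              rw [hSK2, if_pos (rfl : (Kn:Fin (n+1)) = Kn),
                  if_neg (show ¬((Kn:Fin (n+1)) = J1) from fun hc => hJ1Kn hc.symm),
                  if_pos (rfl : (Kn:Fin (n+1)) = Kn),
                  if_neg (show ¬((Kn:Fin (n+1)) = 0 ∧ (Kn:Fin (n+1)) = J1) from
                    fun hc => hKn0 hc.1.symm),
                  if_neg (show ¬((Kn:Fin (n+1)) = 0 ∧ (Kn:Fin (n+1)) = Kn) from
                    fun hc => hKn0 hc.1.symm),
                  if_neg (show ¬((Kn:Fin (n+1)) = Kn ∧ (Kn:Fin (n+1)) = J1) from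
                    fun hc => hJ1Kn hc.2.symm),
                  if_pos (show (Kn:Fin (n+1)) = Kn ∧ (Kn:Fin (n+1)) = Kn from ⟨rfl, rfl⟩)]
              simp only [zero_add, add_zero]
              rw [show (1 / (2*N) * (2*N + -N)) = ((1/2) : ℝ) from by field_simp; ring]
            · rw [hSo2 i hi0 hiK, zero_mul, zero_smul,
                  if_neg (show ¬(i = 0 ∧ (Kn:Fin (n+1)) = J1) from fun hc => hi0 hc.1),
                  if_neg (show ¬(i = 0 ∧ (Kn:Fin (n+1)) = Kn) from fun hc => hi0 hc.1),
                  if_neg (show ¬(i = Kn ∧ (Kn:Fin (n+1)) = J1) from fun hc => hiK hc.1),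
                  if_neg (show ¬(i = Kn ∧ (Kn:Fin (n+1)) = Kn) from fun hc => hiK hc.1)]
              simp only [add_zero]
        · by_cases hiK : i = Kn
          · subst hiK
            rw [hSKo j hj1 hjK, zero_mul, zero_smul,
                if_neg (show ¬((Kn:Fin (n+1)) = 0 ∧ j = J1) from fun hc => hj1 hc.2),
                if_neg (show ¬((Kn:Fin (n+1)) = 0 ∧ j = Kn) from fun hc => hjK hc.2),
                if_neg (show ¬((Kn:Fin (n+1)) = Kn ∧ j = J1) from fun hc => hj1 hc.2),
                if_neg (show ¬((Kn:Fin (n+1)) = Kn ∧ j = Kn) from fun hc => hjK hc.2)]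
            simp only [add_zero]
          · rw [if_neg hiK, if_neg hj1, if_neg hjK, add_zero, mul_zero, zero_smul,
                if_neg (show ¬(i = 0 ∧ j = J1) from fun hc => hj1 hc.2),
                if_neg (show ¬(i = 0 ∧ j = Kn) from fun hc => hjK hc.2),
                if_neg (show ¬(i = Kn ∧ j = J1) from fun hc => hj1 hc.2),
                if_neg (show ¬(i = Kn ∧ j = Kn) from fun hc => hjK hc.2)]
            simp only [add_zero]
    rw [Finset.sum_congr rfl (fun i _ => Finset.sum_congr rfl (fun j _ => hterm i j))]
    simp only [Finset.sum_add_distrib]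
    rw [sum_sum_ite Finset.univ (0 : Fin (n+1)) J1 (Finset.mem_univ _)
          ((-(1/2):ℝ) • fvec n (n+1) 0 J1),
        sum_sum_ite Finset.univ (0 : Fin (n+1)) Kn (Finset.mem_univ _)
          ((-(1/2):ℝ) • fvec n (n+1) 0 Kn),
        sum_sum_ite Finset.univ Kn J1 (Finset.mem_univ _) (((1/2):ℝ) • fvec n (n+1) Kn J1),
        sum_sum_ite Finset.univ Kn Kn (Finset.mem_univ _) (((1/2):ℝ) • fvec n (n+1) Kn Kn)]
    funext p
    rcases p with a | z
    · simp only [Pi.add_apply, Pi.smul_apply, smul_eq_mul, fvec, cvec]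
      by_cases ha0 : a = 0
      · subst ha0
        have h0 : (0 : Fin (n+1)).val = 0 := rfl
        rw [if_pos rfl, if_neg (fun hc : (0:Fin (n+1)) = Kn => hKn0 hc)]
        simp [h0]
        norm_num
      · have h0 : ¬ (a.val = 0) := fun hc => ha0 (Fin.ext (by simpa using hc))
        rw [if_neg ha0]
        by_cases haK : a = Kn
        · subst haK
          rw [if_pos rfl]
          simp [hvKn, h0]
          norm_num
          omega
        · have hk' : ¬ (a.val = n) := by
            intro hc; exact haK (Fin.ext (by rw [hvKn]; omega))
          rw [if_neg haK]
          simp [h0, hk']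
    · rcases z with _ | b
      · simp [fvec, cvec]
      · simp only [Pi.add_apply, Pi.smul_apply, smul_eq_mul, fvec, cvec]
        by_cases hb1 : b = J1
        · subst hb1
          rw [if_pos rfl, if_neg hJ1Kn]
          norm_num
        · by_cases hbK : b = Kn
          · subst hbK
            rw [if_pos rfl, if_neg (fun hc : (Kn:Fin (n+1)) = J1 => hJ1Kn hc.symm)]
            norm_num
          · rw [if_neg hb1, if_neg hbK]
            norm_num
  · unfold cvec
    rw [dotProduct, Fintype.sum_sum_type]
    have h2 : ∀ z : Unit ⊕ Fin (n+1),
        (match (Sum.inr z : PIdx n (n+1)) with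
          | Sum.inl a => if a.val = 0 then (-1:ℝ) else if a.val = n then 1 else 0
          | Sum.inr _ => 0) * u (Sum.inr z) = 0 := by
      intro z; simp
    rw [Finset.sum_congr rfl (fun z _ => h2 z), Finset.sum_const_zero, add_zero]
    have h1 : ∀ a : Fin (n+1),
        (if a.val = 0 then (-1:ℝ) else if a.val = n then 1 else 0) * u (Sum.inl a)
        = if a = Kn then 2*N else 0 := by
      intro a
      by_cases haK : a = Kn
      · subst haK
        have hv0 : ¬ (Kn.val = 0) := by rw [hvKn]; omega
        have hvk : (Kn.val = n) := hvKn
        simp [hu, hv0, hvk]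
        intro hn0; omega
      · simp [hu, haK]
    rw [Finset.sum_congr rfl (fun a _ => h1 a), Finset.sum_ite_eq' Finset.univ Kn]
    simp [hN]

/-- Theorem 4 (LV-optimality of the highest-dose extended Senn design,
t = n+1): (a) at every stage k ∈ {1,…,n}, for every extended dose-escalation
design ξ and every u with M^{(k)}(ξ)u = c_k one has c_k^T u ≥ 4(n+1), with
the value 4(n+1) attained by the highest-dose extended Senn design;
(b) for the full moment matrix, for every extended dose-escalation design ξ
and every u with M(ξ)u = cₙ one has cₙ^T u ≥ 2(n+1), with the value 2(n+1)
attained by the highest-dose extended Senn design. -/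
theorem stmt12 (n : ℕ) (hn : 2 ≤ n) :
    ((∀ ξ : Fin (n+1) → Fin (n+1) → ℝ, isEscalation n (n+1) ξ →
      ∀ k : ℕ, 1 ≤ k → k ≤ n →
        ∀ u : PIdx n (n+1) → ℝ, (momMstage n (n+1) ξ k).mulVec u = cvec n (n+1) k →
          4 * ((n : ℝ) + 1) ≤ cvec n (n+1) k ⬝ᵥ u) ∧
     (∀ k : ℕ, 1 ≤ k → k ≤ n →
      ∃ u : PIdx n (n+1) → ℝ,
        (momMstage n (n+1) (highSenn n) k).mulVec u = cvec n (n+1) k ∧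
        cvec n (n+1) k ⬝ᵥ u = 4 * ((n : ℝ) + 1))) ∧
    ((∀ ξ : Fin (n+1) → Fin (n+1) → ℝ, isEscalation n (n+1) ξ →
      ∀ u : PIdx n (n+1) → ℝ, (momM n (n+1) ξ).mulVec u = cvec n (n+1) n →
        2 * ((n : ℝ) + 1) ≤ cvec n (n+1) n ⬝ᵥ u) ∧
     (∃ u : PIdx n (n+1) → ℝ,
        (momM n (n+1) (highSenn n)).mulVec u = cvec n (n+1) n ∧
        cvec n (n+1) n ⬝ᵥ u = 2 * ((n : ℝ) + 1))) :=
  ⟨⟨fun ξ hξ k hk1 hkn u hu => lowerA n hn ξ hξ k hk1 hkn u hu,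
    fun k hk1 hkn => existA n hn k hk1 hkn⟩,
   ⟨fun ξ hξ u hu => lowerB n hn ξ hξ u hu, existB n hn⟩⟩
end
end

section
/- The Senn design is MV-optimal among standard dose-escalation designs for comparing drug doses with the placebo: for every standard dose-escalation design ξ (t = n) with N_A(ξ) invertible, max_{1 ≤ i ≤ n} (N_A(ξ)^{-1})_{ii} ≥ 4n, while the Senn design ξ_S satisfies N_A(ξ_S)^{-1} = 4n·I_n, so that max_{1 ≤ i ≤ n} (N_A(ξ_S)^{-1})_{ii} = 4n. Hence the Senn design minimizes the maximum of the variances of the least-squares estimators of τ_1 − τ_0, …, τ_n − τ_0. -/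
noncomputable section

open Matrix Finset

/-- Treatment proportions r_i(ξ). -/
def repl (n t : ℕ) (ξ : Fin (n+1) → Fin t → ℝ) (i : Fin (n+1)) : ℝ := ∑ k, ξ i k

/-- The information matrix N_A(ξ) = diag(r_1,…,r_n) − t·Z Z^T for comparing
the doses with the placebo. -/
def NA (n t : ℕ) (ξ : Fin (n+1) → Fin t → ℝ) : Matrix (Fin n) (Fin n) ℝ :=
  fun i j => (if i = j then repl n t ξ i.succ else 0) -
    (t : ℝ) * ∑ k, ξ i.succ k * ξ j.succ k

/-- Smallest eigenvalue of a real symmetric matrix, via the Rayleigh quotient. -/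
def lambdaMin {m : ℕ} (A : Matrix (Fin m) (Fin m) ℝ) : ℝ :=
  sInf { r : ℝ | ∃ x : Fin m → ℝ, ∑ i, x i ^ 2 = 1 ∧ r = ∑ i, ∑ j, x i * A i j * x j }

/-- Theorem 5 (MV-optimality of the Senn design, t = n): for every standard
dose-escalation design with invertible N_A, the maximum diagonal entry of
N_A(ξ)⁻¹ is at least 4n (i.e., some dose–placebo variance is ≥ 4n), while
the Senn design satisfies N_A(ξ_S)⁻¹ = 4n·I, so all its dose–placebo
variances equal 4n; hence the Senn design minimizes the maximum variance of
the least-squares estimators of τ₁ − τ₀, …, τₙ − τ₀. -/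
theorem stmt13 (n : ℕ) (hn : 2 ≤ n) :
    (∀ ξ : Fin (n+1) → Fin n → ℝ, isEscalation n n ξ → IsUnit (NA n n ξ).det →
      ∃ i : Fin n, 4 * (n : ℝ) ≤ (NA n n ξ)⁻¹ i i) ∧
    (NA n n (senn n))⁻¹ = (4 * (n : ℝ)) • (1 : Matrix (Fin n) (Fin n) ℝ) := by
  constructor
  · intro ξ hesc hdet
    obtain ⟨⟨hpos, _⟩, hzero, hcol⟩ := hesc
    have hn0 : (0:ℝ) < n := by exact_mod_cast Nat.lt_of_lt_of_le two_pos hn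
    set N := NA n n ξ with hN
    -- symmetry
    have hsymm : Nᵀ = N := by
      ext i j
      simp only [Matrix.transpose_apply, hN, NA]
      congr 1
      · rcases eq_or_ne i j with h | h
        · subst h; rfl
        · simp [h, Ne.symm h]
      · congr 1; exact Finset.sum_congr rfl fun k _ => mul_comm _ _
    -- quadratic form expansion
    have key2 : ∀ g : Fin n → Fin n → ℝ,
        (∑ i, ∑ j, ∑ k, g i k * g j k) = ∑ k, (∑ i, g i k)^2 := by
      intro g
      calc (∑ i, ∑ j, ∑ k, g i k * g j k)
          = ∑ i, ∑ k, ∑ j, g i k * g j k :=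
            Finset.sum_congr rfl fun i _ => by rw [Finset.sum_comm]
        _ = ∑ k, ∑ i, ∑ j, g i k * g j k := by rw [Finset.sum_comm]
        _ = ∑ k, (∑ i, g i k)^2 := Finset.sum_congr rfl fun k _ => by
            rw [sq, Finset.sum_mul_sum]
    have expand : ∀ x : Fin n → ℝ,
        x ⬝ᵥ N *ᵥ x = (∑ i, x i ^ 2 * ∑ k, ξ i.succ k)
          - (n:ℝ) * ∑ k, (∑ i, x i * ξ i.succ k)^2 := by
      intro x
      have l2 : ∀ i : Fin n, (∑ j, N i j * x j)
          = (∑ k, ξ i.succ k) * x i - (n:ℝ) * ∑ j, ∑ k, (ξ i.succ k * ξ j.succ k) * x j := by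
        intro i
        simp only [hN, NA, repl, sub_mul, ite_mul, zero_mul]
        rw [Finset.sum_sub_distrib]
        congr 1
        · rw [Finset.sum_ite_eq]
          simp
        · rw [Finset.mul_sum]
          refine Finset.sum_congr rfl fun j _ => ?_
          rw [mul_assoc, Finset.sum_mul]
      calc x ⬝ᵥ N *ᵥ x = ∑ i, x i * ∑ j, N i j * x j := rfl
        _ = ∑ i, (x i ^ 2 * (∑ k, ξ i.succ k)
              - (n:ℝ) * ∑ j, ∑ k, (x i * ξ i.succ k) * (x j * ξ j.succ k)) := by
            refine Finset.sum_congr rfl fun i _ => ?_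
            rw [l2 i]
            have h1 : x i * ∑ j, ∑ k, (ξ i.succ k * ξ j.succ k) * x j
                = ∑ j, ∑ k, (x i * ξ i.succ k) * (x j * ξ j.succ k) := by
              rw [Finset.mul_sum]
              refine Finset.sum_congr rfl fun j _ => ?_
              rw [Finset.mul_sum]
              exact Finset.sum_congr rfl fun k _ => by ring
            rw [← h1]; ring
        _ = (∑ i, x i ^ 2 * ∑ k, ξ i.succ k)
              - (n:ℝ) * ∑ i, ∑ j, ∑ k, (x i * ξ i.succ k) * (x j * ξ j.succ k) := by
            rw [Finset.sum_sub_distrib, ← Finset.mul_sum]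
        _ = (∑ i, x i ^ 2 * ∑ k, ξ i.succ k)
              - (n:ℝ) * ∑ k, (∑ i, x i * ξ i.succ k)^2 := by
            rw [key2 (fun i k => x i * ξ i.succ k)]
    -- PSD
    have hpsd : ∀ x : Fin n → ℝ, 0 ≤ x ⬝ᵥ N *ᵥ x := by
      intro x
      rw [expand x, sub_nonneg]
      have perk : ∀ k : Fin n, (n:ℝ) * (∑ i, x i * ξ i.succ k)^2 ≤ ∑ i, x i ^ 2 * ξ i.succ k := by
        intro k
        have hcs : (∑ i, x i * ξ i.succ k)^2
            ≤ (∑ i, x i ^ 2 * ξ i.succ k) * (∑ i : Fin n, ξ i.succ k) :=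
          Finset.sum_sq_le_sum_mul_sum_of_sq_eq_mul Finset.univ
            (fun i _ => mul_nonneg (sq_nonneg _) (hpos _ _))
            (fun i _ => hpos _ _)
            (fun i _ => by ring)
        have hsumle : (∑ i : Fin n, ξ i.succ k) ≤ 1 / n := by
          have h0 : (0:ℝ) ≤ ξ 0 k := hpos _ _
          have hc := hcol k
          rw [Fin.sum_univ_succ] at hc
          linarith
        have hq : (0:ℝ) ≤ ∑ i, x i ^ 2 * ξ i.succ k :=
          Finset.sum_nonneg fun i _ => mul_nonneg (sq_nonneg _) (hpos _ _)
        calc (n:ℝ) * (∑ i, x i * ξ i.succ k)^2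
            ≤ (n:ℝ) * ((∑ i, x i ^ 2 * ξ i.succ k) * (1 / n)) := by
              refine mul_le_mul_of_nonneg_left (hcs.trans ?_) hn0.le
              exact mul_le_mul_of_nonneg_left hsumle hq
          _ = ∑ i, x i ^ 2 * ξ i.succ k := by field_simp
      calc (n:ℝ) * ∑ k, (∑ i, x i * ξ i.succ k)^2
          = ∑ k, (n:ℝ) * (∑ i, x i * ξ i.succ k)^2 := Finset.mul_sum _ _ _
        _ ≤ ∑ k, ∑ i, x i ^ 2 * ξ i.succ k := Finset.sum_le_sum fun k _ => perk k
        _ = ∑ i, ∑ k, x i ^ 2 * ξ i.succ k := by rw [Finset.sum_comm]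
        _ = ∑ i, x i ^ 2 * ∑ k, ξ i.succ k :=
            Finset.sum_congr rfl fun i _ => (Finset.mul_sum _ _ _).symm
    -- last diagonal entry small
    have hne : n - 1 < n := by omega
    set i0 : Fin n := ⟨n-1, hne⟩ with hi0
    have hzlast : ∀ k : Fin n, k ≠ i0 → ξ i0.succ k = 0 := by
      intro k hk
      have hk1 : k.val < n := k.isLt
      have hk2 : k.val ≠ n - 1 := fun h => hk (Fin.ext h)
      apply hzero
      · omega
      · simp only [Fin.val_succ, hi0]
        omega
    have hdiag : N i0 i0 ≤ 1/(4*(n:ℝ)) := by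
      have hr : repl n n ξ i0.succ = ξ i0.succ i0 := by
        rw [repl, Finset.sum_eq_single i0 (fun k _ hk => hzlast k hk)
          (fun h => absurd (Finset.mem_univ _) h)]
      have hsq : (∑ k, ξ i0.succ k * ξ i0.succ k) = ξ i0.succ i0 * ξ i0.succ i0 := by
        rw [Finset.sum_eq_single i0 (fun k _ hk => by rw [hzlast k hk]; ring)
          (fun h => absurd (Finset.mem_univ _) h)]
      have : N i0 i0 = repl n n ξ i0.succ - (n:ℝ) * ∑ k, ξ i0.succ k * ξ i0.succ k := by
        simp [hN, NA]
      rw [this, hr, hsq]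
      set c := ξ i0.succ i0
      rw [le_div_iff₀ (by positivity : (0:ℝ) < 4*n)]
      nlinarith [sq_nonneg (2*(n:ℝ)*c - 1)]
    -- Cauchy–Schwarz via discriminant
    have hinv : N * N⁻¹ = 1 := Matrix.mul_nonsing_inv _ hdet
    set e : Fin n → ℝ := Pi.single i0 1 with he
    set v : Fin n → ℝ := N⁻¹ *ᵥ e with hv
    have hA : e ⬝ᵥ N *ᵥ e = N i0 i0 := by
      rw [he, Matrix.mulVec_single, single_dotProduct]
      simp
    have hB : e ⬝ᵥ N *ᵥ v = 1 := by
      rw [hv, Matrix.mulVec_mulVec, hinv, Matrix.one_mulVec, he, single_dotProduct]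
      simp
    have hC : v ⬝ᵥ N *ᵥ v = N⁻¹ i0 i0 := by
      rw [hv, Matrix.mulVec_mulVec, hinv, Matrix.one_mulVec, he, dotProduct_single,
        Matrix.mulVec_single]
      simp
    have hB' : v ⬝ᵥ N *ᵥ e = 1 := by
      rw [Matrix.dotProduct_mulVec, ← Matrix.mulVec_transpose, hsymm, dotProduct_comm]
      exact hB
    have hq : ∀ t : ℝ, 0 ≤ (N⁻¹ i0 i0) * (t * t) + 2 * t + N i0 i0 := by
      intro t
      have hps := hpsd (e + t • v)
      rw [Matrix.mulVec_add, Matrix.mulVec_smul, dotProduct_add, add_dotProduct,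
        add_dotProduct, smul_dotProduct, smul_dotProduct, dotProduct_smul, dotProduct_smul,
        hA, hB, hB', hC] at hps
      simp only [smul_eq_mul] at hps
      linarith [hps]
    have hd := discrim_le_zero hq
    rw [discrim] at hd
    have hNii : 0 < N i0 i0 := by
      rcases lt_or_ge 0 (N i0 i0) with h | h
      · exact h
      · nlinarith [hC ▸ hpsd v]
    refine ⟨i0, ?_⟩
    have h1 : 1 ≤ N⁻¹ i0 i0 * N i0 i0 := by nlinarith
    have h2 : 1/(N i0 i0) ≤ N⁻¹ i0 i0 := by
      rw [div_le_iff₀ hNii]; linarith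
    have h4n : 4*(n:ℝ) ≤ 1/(N i0 i0) := by
      rw [le_div_iff₀ hNii]
      calc 4*(n:ℝ) * N i0 i0 ≤ 4*(n:ℝ) * (1/(4*(n:ℝ))) :=
            mul_le_mul_of_nonneg_left hdiag (by positivity)
        _ = 1 := by field_simp
    linarith
  · have hn0 : (0:ℝ) < n := by exact_mod_cast Nat.lt_of_lt_of_le two_pos hn
    have hs : ∀ (i k : Fin n), senn n i.succ k = if i = k then 1/(2*(n:ℝ)) else 0 := by
      intro i k
      simp only [senn, Fin.val_succ, Fin.ext_iff]
      congr 1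
      simp only [eq_iff_iff]
      omega
    have hNA : NA n n (senn n) = ((4 * (n : ℝ))⁻¹) • (1 : Matrix (Fin n) (Fin n) ℝ) := by
      ext i j
      simp only [NA, repl, hs, Matrix.smul_apply, Matrix.one_apply, smul_eq_mul]
      rcases eq_or_ne i j with h | h
      · subst h
        simp [Finset.sum_ite_eq, mul_ite]
        field_simp
        ring
      · simp [h, Finset.sum_ite_eq, mul_ite, Ne.symm h]
    rw [hNA]
    apply Matrix.inv_eq_right_inv
    rw [Matrix.smul_mul, Matrix.mul_smul, smul_smul, Matrix.one_mul]
    rw [inv_mul_cancel₀ (by positivity), one_smul]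
end
end
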